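/- arXiv:math-ph/0503023 — 2 statements merged into one kernel-verified Lean document; each statement's English description precedes it below -/
import Mathlib

section
/- Nishimori identity for the coupling: for every bond b ∈ B, the quenched average of the Gibbs expectation of j_b S_b equals the Nishimori-line parameter, i.e. [⟨j_b S_b⟩] = x_b. -/
open MeasureTheory ProbabilityTheory Filter

noncomputable section

/-- The real value ±1 of a Boolean spin. -/
def spin (s : Bool) : ℝ := if s then 1 else -1

/-- The bond spin `S_b = S_n S_{n'}` for a bond `b` with endpoints `ep b = (n, n')`. -/
def bondSpin {V ι : Type*} (ep : ι → V × V) (S : V → Bool) (b : ι) : ℝ :=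
  spin (S (ep b).1) * spin (S (ep b).2)

/-- The potential `U(j, S) = Σ_b x_b j_b S_b`. -/
def potential {V ι : Type*} [Fintype ι] (ep : ι → V × V) (x j : ι → ℝ)
    (S : V → Bool) : ℝ :=
  ∑ b, x b * j b * bondSpin ep S b

/-- The partition function `Z(j) = Σ_S exp U(j,S)`. -/
def partitionFn {V ι : Type*} [Fintype V] [DecidableEq V] [Fintype ι]
    (ep : ι → V × V) (x j : ι → ℝ) : ℝ :=
  ∑ S : V → Bool, Real.exp (potential ep x j S)

/-- The Boltzmann–Gibbs expectation `⟨f⟩` at fixed disorder `j`. -/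
def gibbs {V ι : Type*} [Fintype V] [DecidableEq V] [Fintype ι]
    (ep : ι → V × V) (x j : ι → ℝ) (f : (V → Bool) → ℝ) : ℝ :=
  (∑ S : V → Bool, f S * Real.exp (potential ep x j S)) / partitionFn ep x j

/-- The law of the couplings: independent Gaussians, `j_b` of mean `x_b` and variance 1. -/
def couplings {ι : Type*} [Fintype ι] (x : ι → ℝ) : Measure (ι → ℝ) :=
  Measure.pi fun b => gaussianReal (x b) 1

/-- The quenched average `[F]`. -/
def quenched {ι : Type*} [Fintype ι] (x : ι → ℝ) (F : (ι → ℝ) → ℝ) : ℝ :=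
  ∫ j, F j ∂(couplings x)

/-- The quenched pressure `P({x}) = [ln Z]`. -/
def pressure {V ι : Type*} [Fintype V] [DecidableEq V] [Fintype ι]
    (ep : ι → V × V) (x : ι → ℝ) : ℝ :=
  quenched x fun j => Real.log (partitionFn ep x j)

open Real
open scoped ENNReal NNReal
set_option linter.unusedSectionVars false
set_option linter.unusedVariables false

set_option maxHeartbeats 1000000
section NishimoriAux

lemma gauss_pdf_tilt (m a t : ℝ) :
    gaussianPDFReal m 1 t * Real.exp (a*t - a*m - a^2/2) = gaussianPDFReal (m+a) 1 t := by
  unfold gaussianPDFReal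
  rw [mul_assoc, ← Real.exp_add]
  congr 2
  · push_cast
    ring

lemma exp_tilt_measurable (m a : ℝ) :
    Measurable (fun t => ENNReal.ofReal (Real.exp (a*t - a*m - a^2/2))) := by
  fun_prop

lemma gauss_tilt_measure (m a : ℝ) :
    gaussianReal (m+a) 1 = (gaussianReal m 1).withDensity
      (fun t => ENNReal.ofReal (Real.exp (a*t - a*m - a^2/2))) := by
  rw [gaussianReal_of_var_ne_zero _ one_ne_zero, gaussianReal_of_var_ne_zero _ one_ne_zero,
    ← withDensity_mul _ (measurable_gaussianPDF _ _) (exp_tilt_measurable m a)]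
  congr 1
  funext t
  show ENNReal.ofReal (gaussianPDFReal (m+a) 1 t)
      = ENNReal.ofReal (gaussianPDFReal m 1 t) * ENNReal.ofReal (Real.exp (a*t - a*m - a^2/2))
  rw [← ENNReal.ofReal_mul (gaussianPDFReal_nonneg _ _ _), gauss_pdf_tilt]

lemma exp_mul_pdf (m a t : ℝ) :
    Real.exp (a*t) * gaussianPDFReal m 1 t
      = Real.exp (a*m + a^2/2) * gaussianPDFReal (m+a) 1 t := by
  rw [← gauss_pdf_tilt m a t, mul_left_comm, ← Real.exp_add,
    show a*m + a^2/2 + (a*t - a*m - a^2/2) = a*t by ring]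
  exact mul_comm _ _

lemma integral_tilt (m a : ℝ) (g : ℝ → ℝ) :
    ∫ t, Real.exp (a*t) * g t ∂gaussianReal m 1
      = Real.exp (a*m + a^2/2) * ∫ t, g t ∂gaussianReal (m+a) 1 := by
  have hmeas : Measurable (fun t => Real.toNNReal (Real.exp (a*t - a*m - a^2/2))) := by
    fun_prop
  have hwd : (gaussianReal (m+a) 1) = (gaussianReal m 1).withDensity
      (fun t => ((Real.toNNReal (Real.exp (a*t - a*m - a^2/2)) : ℝ≥0) : ℝ≥0∞)) :=
    gauss_tilt_measure m a
  rw [hwd, integral_withDensity_eq_integral_smul hmeas g]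
  simp only [NNReal.smul_def, Real.coe_toNNReal _ (Real.exp_nonneg _), smul_eq_mul]
  rw [← integral_const_mul]
  congr 1
  funext t
  rw [← mul_assoc, ← Real.exp_add]
  rw [show a*m + a^2/2 + (a*t - a*m - a^2/2) = a*t by ring]

lemma integrable_exp_gauss (m a : ℝ) :
    Integrable (fun t => Real.exp (a*t)) (gaussianReal m 1) := by
  rw [gaussianReal_of_var_ne_zero _ one_ne_zero]
  rw [integrable_withDensity_iff (measurable_gaussianPDF _ _)
    (Filter.Eventually.of_forall fun t => ENNReal.ofReal_lt_top)]
  have : (fun t => Real.exp (a*t) * (gaussianPDF m 1 t).toReal)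
      = fun t => Real.exp (a*m + a^2/2) * gaussianPDFReal (m+a) 1 t := by
    funext t
    simp only [gaussianPDF_def, ENNReal.toReal_ofReal (gaussianPDFReal_nonneg _ _ _)]
    rw [exp_mul_pdf]
  rw [this]
  exact (integrable_gaussianPDFReal _ _).const_mul _

lemma integrable_mul_exp_gauss (m a : ℝ) :
    Integrable (fun t => t * Real.exp (a*t)) (gaussianReal m 1) := by
  rw [gaussianReal_of_var_ne_zero _ one_ne_zero]
  rw [integrable_withDensity_iff (measurable_gaussianPDF _ _)
    (Filter.Eventually.of_forall fun t => ENNReal.ofReal_lt_top)]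
  have heq : (fun t => t * Real.exp (a*t) * (gaussianPDF m 1 t).toReal)
      = fun t => Real.exp (a*m + a^2/2) * (t * gaussianPDFReal (m+a) 1 t) := by
    funext t
    simp only [gaussianPDF_def, ENNReal.toReal_ofReal (gaussianPDFReal_nonneg _ _ _)]
    rw [show t * Real.exp (a*t) * gaussianPDFReal m 1 t
        = t * (Real.exp (a*t) * gaussianPDFReal m 1 t) from by ring, exp_mul_pdf]
    ring
  rw [heq]
  refine Integrable.const_mul ?_ _
  set m' := m + a
  have h1 : Integrable (fun t : ℝ => t * Real.exp (-(1/2:ℝ) * t^2)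
      + m' * Real.exp (-(1/2:ℝ) * t^2)) :=
    (integrable_mul_exp_neg_mul_sq (by norm_num : (0:ℝ) < 1/2)).add
      ((integrable_exp_neg_mul_sq (by norm_num : (0:ℝ) < 1/2)).const_mul m')
  have h2 := h1.comp_sub_right m'
  have h3 : Integrable (fun t : ℝ => t * Real.exp (-(1/2:ℝ) * (t - m')^2)) := by
    convert h2 using 1
    funext t
    beta_reduce
    ring
  have : (fun t => t * gaussianPDFReal m' 1 t)
      = fun t => (√(2 * π))⁻¹ * (t * Real.exp (-(1/2:ℝ) * (t - m')^2)) := by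
    funext t
    unfold gaussianPDFReal
    push_cast
    rw [mul_one, mul_one]
    rw [show -(t - m')^2 / 2 = -(1/2:ℝ) * (t - m')^2 by ring]
    ring
  rw [this]
  exact h3.const_mul _

lemma integrable_id_gauss (m : ℝ) : Integrable (fun t : ℝ => t) (gaussianReal m 1) := by
  have := integrable_mul_exp_gauss m 0
  simpa using this

lemma integral_id_gauss (m : ℝ) : ∫ t, t ∂gaussianReal m 1 = m := by
  have h0 : ∫ t, t ∂gaussianReal 0 1 = 0 := by
    have hmap : (gaussianReal 0 1).map (fun t => -t) = gaussianReal 0 1 := by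
      have h := gaussianReal_map_const_mul (μ := 0) (v := 1) (-1)
      have hv : (NNReal.mk ((-1:ℝ)^2) (sq_nonneg _)) * 1 = 1 := by
        ext; norm_num
      rw [hv] at h
      simpa [neg_one_mul] using h
    have hint := integral_map (μ := gaussianReal 0 1) (φ := fun t : ℝ => -t)
      (measurable_neg.aemeasurable) (f := fun t : ℝ => t)
      measurable_id.aestronglyMeasurable
    rw [hmap] at hint
    rw [integral_neg] at hint
    linarith
  have hmap : (gaussianReal 0 1).map (· + m) = gaussianReal m 1 := by
    simpa using gaussianReal_map_add_const (μ := 0) (v := 1) m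
  have hint := integral_map (μ := gaussianReal 0 1) (φ := fun x : ℝ => x + m)
    (by fun_prop) (f := fun t : ℝ => t) measurable_id.aestronglyMeasurable
  rw [hmap] at hint
  rw [hint, integral_add (integrable_id_gauss 0) (integrable_const m)]
  simp [h0]


/-- Type synonym to install a custom `MeasureSpace` structure on `ℝ`. -/
def RCopy (ι : Type*) (_ : ι) : Type := ℝ

instance {ι : Type*} (i : ι) : MeasurableSpace (RCopy ι i) := inferInstanceAs (MeasurableSpace ℝ)

lemma integral_pi_prod {ι : Type*} [Fintype ι] (μ : ι → Measure ℝ) [∀ i, SigmaFinite (μ i)]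
    (f : ι → ℝ → ℝ) :
    ∫ j, ∏ i, f i (j i) ∂Measure.pi μ = ∏ i, ∫ t, f i t ∂μ i := by
  letI : ∀ i : ι, MeasureSpace (RCopy ι i) := fun i => ⟨μ i⟩
  letI : ∀ i : ι, SigmaFinite (volume : Measure (RCopy ι i)) := fun i =>
    inferInstanceAs (SigmaFinite (μ i))
  exact MeasureTheory.integral_fintype_prod_eq_prod (ι := ι) (E := RCopy ι)
    (fun i (t : RCopy ι i) => f i t)

lemma integrable_pi_prod {ι : Type*} [Fintype ι] (μ : ι → Measure ℝ) [∀ i, SigmaFinite (μ i)]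
    (f : ι → ℝ → ℝ) (hf : ∀ i, Integrable (f i) (μ i)) :
    Integrable (fun j : ι → ℝ => ∏ i, f i (j i)) (Measure.pi μ) := by
  letI : ∀ i : ι, MeasureSpace (RCopy ι i) := fun i => ⟨μ i⟩
  letI : ∀ i : ι, SigmaFinite (volume : Measure (RCopy ι i)) := fun i =>
    inferInstanceAs (SigmaFinite (μ i))
  exact MeasureTheory.Integrable.fintype_prod_dep (E := RCopy ι)
    (f := fun i (t : RCopy ι i) => f i t) hf

lemma ofReal_indicator' {α : Type*} (u : Set α) (f : α → ℝ) (j : α) :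
    ENNReal.ofReal (u.indicator f j) = u.indicator (fun j => ENNReal.ofReal (f j)) j := by
  by_cases hj : j ∈ u <;> simp [hj]

lemma pi_withDensity {ι : Type*} [Fintype ι] (ν μ' : ι → Measure ℝ) [∀ i, IsProbabilityMeasure (ν i)]
    [∀ i, IsProbabilityMeasure (μ' i)] (g : ι → ℝ → ℝ)
    (hgnn : ∀ c t, 0 ≤ g c t) (hint : ∀ c, Integrable (g c) (ν c))
    (hwd : ∀ c, μ' c = (ν c).withDensity (fun t => ENNReal.ofReal (g c t))) :
    Measure.pi μ' = (Measure.pi ν).withDensity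
      (fun j => ENNReal.ofReal (∏ c, g c (j c))) := by
  refine Measure.pi_eq fun s hs => ?_
  have hbox : MeasurableSet (Set.pi Set.univ s) := MeasurableSet.univ_pi hs
  rw [withDensity_apply _ hbox]
  have key : (Set.pi Set.univ s).indicator (fun j : ι → ℝ => ∏ c, g c (j c))
      = fun j => ∏ c, (s c).indicator (g c) (j c) := by
    funext j
    by_cases hj : j ∈ Set.pi Set.univ s
    · rw [Set.indicator_of_mem hj]
      exact Finset.prod_congr rfl fun c _ =>
        (Set.indicator_of_mem (hj c (Set.mem_univ c)) _).symm
    · rw [Set.indicator_of_notMem hj]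
      rw [Set.mem_pi] at hj; push_neg at hj
      obtain ⟨c, _, hc⟩ := hj
      exact (Finset.prod_eq_zero (Finset.mem_univ c)
        (Set.indicator_of_notMem hc _)).symm
  have hind : ∀ c, Integrable ((s c).indicator (g c)) (ν c) :=
    fun c => (hint c).indicator (hs c)
  have hIprod : Integrable (fun j : ι → ℝ => ∏ c, (s c).indicator (g c) (j c))
      (Measure.pi ν) := integrable_pi_prod _ _ hind
  calc ∫⁻ j in Set.pi Set.univ s, ENNReal.ofReal (∏ c, g c (j c)) ∂(Measure.pi ν)
      = ∫⁻ j, (Set.pi Set.univ s).indicator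
          (fun j => ENNReal.ofReal (∏ c, g c (j c))) j ∂(Measure.pi ν) :=
        (lintegral_indicator hbox _).symm
    _ = ∫⁻ j, ENNReal.ofReal ((Set.pi Set.univ s).indicator
          (fun j => ∏ c, g c (j c)) j) ∂(Measure.pi ν) := by
        congr 1; funext j; rw [ofReal_indicator']
    _ = ∫⁻ j, ENNReal.ofReal (∏ c, (s c).indicator (g c) (j c)) ∂(Measure.pi ν) := by
        rw [key]
    _ = ENNReal.ofReal (∫ j, ∏ c, (s c).indicator (g c) (j c) ∂(Measure.pi ν)) := by
        rw [ofReal_integral_eq_lintegral_ofReal hIprod]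
        exact Filter.Eventually.of_forall fun j =>
          Finset.prod_nonneg fun c _ => Set.indicator_nonneg (fun t _ => hgnn c t) _
    _ = ENNReal.ofReal (∏ c, ∫ t, (s c).indicator (g c) t ∂ν c) := by
        rw [integral_pi_prod]
    _ = ∏ c, ENNReal.ofReal (∫ t, (s c).indicator (g c) t ∂ν c) := by
        rw [ENNReal.ofReal_prod_of_nonneg]
        exact fun c _ => integral_nonneg (Set.indicator_nonneg (fun t _ => hgnn c t))
    _ = ∏ c, ∫⁻ t, ENNReal.ofReal ((s c).indicator (g c) t) ∂ν c :=
        Finset.prod_congr rfl fun c _ => ofReal_integral_eq_lintegral_ofReal (hind c)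
          (Filter.Eventually.of_forall fun t =>
            Set.indicator_nonneg (fun t _ => hgnn c t) _)
    _ = ∏ c, ∫⁻ t in s c, ENNReal.ofReal (g c t) ∂ν c := by
        refine Finset.prod_congr rfl fun c _ => ?_
        rw [← lintegral_indicator (hs c)]
        congr 1; funext t; rw [ofReal_indicator']
    _ = ∏ c, μ' c (s c) := by
        refine Finset.prod_congr rfl fun c _ => ?_
        rw [hwd c, withDensity_apply _ (hs c)]


lemma map_pi_coord {ι : Type*} [Fintype ι] (μ ν : ι → Measure ℝ)
    [∀ i, IsProbabilityMeasure (μ i)]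
    [∀ i, IsProbabilityMeasure (ν i)] (f : ι → ℝ → ℝ) (hfm : ∀ i, Measurable (f i))
    (hmap : ∀ i, (μ i).map (f i) = ν i) :
    (Measure.pi μ).map (fun j i => f i (j i)) = Measure.pi ν := by
  refine (Measure.pi_eq fun s hs => ?_).symm
  have hT : Measurable (fun (j : ι → ℝ) (i : ι) => f i (j i)) :=
    measurable_pi_lambda _ fun i => (hfm i).comp (measurable_pi_apply i)
  rw [Measure.map_apply hT (MeasurableSet.univ_pi hs)]
  have hpre : (fun (j : ι → ℝ) (i : ι) => f i (j i)) ⁻¹' (Set.pi Set.univ s)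
      = Set.pi Set.univ (fun i => f i ⁻¹' s i) := by
    ext j; simp [Set.mem_pi]
  rw [hpre, Measure.pi_pi]
  exact Finset.prod_congr rfl fun i _ => by rw [← hmap i, Measure.map_apply (hfm i) (hs i)]


section SpinAux
variable {V ι : Type*} [Fintype V] [DecidableEq V] [Fintype ι]

lemma spin_mul_self (s : Bool) : spin s * spin s = 1 := by cases s <;> simp [spin]

lemma spin_beq (a c : Bool) : spin (a == c) = spin a * spin c := by
  cases a <;> cases c <;> simp [spin]

lemma bondSpin_sq (ep : ι → V × V) (τ : V → Bool) (c : ι) :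
    bondSpin ep τ c * bondSpin ep τ c = 1 := by
  unfold bondSpin
  rw [mul_mul_mul_comm, spin_mul_self, spin_mul_self, mul_one]

lemma bondSpin_eq_or (ep : ι → V × V) (τ : V → Bool) (c : ι) :
    bondSpin ep τ c = 1 ∨ bondSpin ep τ c = -1 := by
  unfold bondSpin spin
  rcases (ep c) with ⟨n, n'⟩
  cases τ n <;> cases τ n' <;> norm_num

lemma abs_bondSpin (ep : ι → V × V) (τ : V → Bool) (c : ι) : |bondSpin ep τ c| = 1 := by
  rcases bondSpin_eq_or ep τ c with h | h <;> rw [h] <;> norm_num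

/-- gauge flip as an equivalence on spin configurations -/
def flipE (τ : V → Bool) : (V → Bool) ≃ (V → Bool) where
  toFun S n := S n == τ n
  invFun S n := S n == τ n
  left_inv S := by
    funext n; show ((S n == τ n) == τ n) = S n; cases S n <;> cases τ n <;> rfl
  right_inv S := by
    funext n; show ((S n == τ n) == τ n) = S n; cases S n <;> cases τ n <;> rfl

lemma bondSpin_flip (ep : ι → V × V) (τ S : V → Bool) (c : ι) :
    bondSpin ep (flipE τ S) c = bondSpin ep S c * bondSpin ep τ c := by
  unfold bondSpin flipE
  simp only [Equiv.coe_fn_mk]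
  rw [spin_beq, spin_beq, mul_mul_mul_comm]

lemma potential_gauge (ep : ι → V × V) (x j : ι → ℝ) (τ S : V → Bool) :
    potential ep x (fun c => bondSpin ep τ c * j c) S
      = potential ep x j (flipE τ S) := by
  unfold potential
  refine Finset.sum_congr rfl fun c _ => ?_
  rw [bondSpin_flip]
  ring

lemma partitionFn_pos (ep : ι → V × V) (x j : ι → ℝ) : 0 < partitionFn ep x j := by
  unfold partitionFn
  exact Finset.sum_pos (fun S _ => Real.exp_pos _) Finset.univ_nonempty

lemma partitionFn_gauge (ep : ι → V × V) (x j : ι → ℝ) (τ : V → Bool) :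
    partitionFn ep x (fun c => bondSpin ep τ c * j c) = partitionFn ep x j := by
  unfold partitionFn
  rw [Fintype.sum_equiv (flipE τ) _ (fun S => Real.exp (potential ep x j S))
    (fun S => by rw [potential_gauge])]

lemma gibbs_gauge (ep : ι → V × V) (x j : ι → ℝ) (τ : V → Bool) (b : ι) :
    gibbs ep x (fun c => bondSpin ep τ c * j c)
      (fun S => (bondSpin ep τ b * j b) * bondSpin ep S b)
      = gibbs ep x j (fun S => j b * bondSpin ep S b) := by
  unfold gibbs
  rw [partitionFn_gauge]
  congr 1
  rw [Fintype.sum_equiv (flipE τ) _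
    (fun S => (j b * bondSpin ep S b) * Real.exp (potential ep x j S))
    (fun S => ?_)]
  beta_reduce
  rw [potential_gauge, bondSpin_flip]
  ring

end SpinAux

lemma integrable_tilt_exp (m a : ℝ) :
    Integrable (fun t => Real.exp (a*t - a*m - a^2/2)) (gaussianReal m 1) := by
  have h : (fun t => Real.exp (a*t - a*m - a^2/2))
      = fun t => Real.exp (-(a*m) - a^2/2) * Real.exp (a*t) := by
    funext t; rw [← Real.exp_add]; congr 1; ring
  rw [h]; exact (integrable_exp_gauss m a).const_mul _

lemma integrable_abs_mul_exp_gauss (m a : ℝ) :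
    Integrable (fun t => |t| * Real.exp (a*t)) (gaussianReal m 1) := by
  have h := (integrable_mul_exp_gauss m a).abs
  refine h.congr (Filter.Eventually.of_forall fun t => ?_)
  beta_reduce
  rw [abs_mul, Real.abs_exp]

lemma integral_withDensity_ofReal {α : Type*} [MeasurableSpace α] (μ : Measure α) (w : α → ℝ)
    (hw : Measurable w) (hwnn : ∀ t, 0 ≤ w t) (g : α → ℝ) :
    ∫ t, g t ∂(μ.withDensity fun t => ENNReal.ofReal (w t)) = ∫ t, w t * g t ∂μ := by
  have hmeas : Measurable fun t => Real.toNNReal (w t) := measurable_real_toNNReal.comp hw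
  rw [show (fun t => ENNReal.ofReal (w t))
      = fun t => ((Real.toNNReal (w t) : ℝ≥0) : ℝ≥0∞) from rfl]
  rw [integral_withDensity_eq_integral_smul hmeas g]
  congr 1; funext t
  rw [NNReal.smul_def, Real.coe_toNNReal _ (hwnn t), smul_eq_mul]

end NishimoriAux

/-- Nishimori identity for the coupling: on the Nishimori line,
for every bond `b`, the quenched average of the Gibbs expectation of `j_b S_b`
equals the parameter `x_b`:  `[⟨j_b S_b⟩] = x_b`. -/
theorem nishimori_coupling_identity
    {V ι : Type*} [Fintype V] [DecidableEq V] [Fintype ι]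
    (ep : ι → V × V) (hep : ∀ b, (ep b).1 ≠ (ep b).2)
    (x : ι → ℝ) (hx : ∀ b, 0 ≤ x b) (b : ι) :
    quenched x (fun j => gibbs ep x j (fun S => j b * bondSpin ep S b)) = x b := by
  classical
  set G : (ι → ℝ) → ℝ := fun j => gibbs ep x j (fun S => j b * bondSpin ep S b) with hG
  set one : V → Bool := fun _ => true with hone
  have hbond1 : ∀ c, bondSpin ep one c = 1 := by
    intro c; simp [bondSpin, spin, hone]
  -- basic measurability
  have hpot_meas : ∀ S : V → Bool, Measurable fun j : ι → ℝ => potential ep x j S := by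
    intro S
    unfold potential
    exact Finset.measurable_sum _ fun c _ =>
      ((measurable_pi_apply (X := fun _ : ι => ℝ) c).const_mul (x c)).mul_const _
  have hGmeas : Measurable G := by
    rw [hG]
    unfold gibbs partitionFn
    refine Measurable.div ?_ ?_
    · exact Finset.measurable_sum _ fun S _ =>
        (((measurable_pi_apply b).mul_const _)).mul (hpot_meas S).exp
    · exact Finset.measurable_sum _ fun S _ => (hpot_meas S).exp
  -- |G j| ≤ |j b|
  have habsG : ∀ j, |G j| ≤ |j b| := by
    intro j
    have hZ := partitionFn_pos ep x j
    rw [hG]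
    unfold gibbs
    rw [abs_div, abs_of_pos hZ, div_le_iff₀ hZ]
    calc |∑ S : V → Bool, (j b * bondSpin ep S b) * Real.exp (potential ep x j S)|
        ≤ ∑ S : V → Bool, |(j b * bondSpin ep S b) * Real.exp (potential ep x j S)| :=
          Finset.abs_sum_le_sum_abs _ _
      _ = ∑ S : V → Bool, |j b| * Real.exp (potential ep x j S) := by
          refine Finset.sum_congr rfl fun S _ => ?_
          rw [abs_mul, abs_mul, abs_bondSpin, mul_one, Real.abs_exp]
      _ = |j b| * partitionFn ep x j := by rw [← Finset.mul_sum]; rfl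
  -- the sum identity ∑ c (s_c - 1) x_c j_c = pot(j,S) - pot(j,one)
  have hsum : ∀ (S : V → Bool) (j : ι → ℝ),
      (∑ c, (bondSpin ep S c - 1) * x c * j c)
        = potential ep x j S - potential ep x j one := by
    intro S j
    unfold potential
    rw [← Finset.sum_sub_distrib]
    refine Finset.sum_congr rfl fun c _ => ?_
    rw [hbond1 c]
    ring
  -- the constant in the tilt vanishes
  have hconst : ∀ (S : V → Bool) (c : ι),
      ((bondSpin ep S c - 1) * x c) * x c + ((bondSpin ep S c - 1) * x c)^2/2 = 0 := by
    intro S c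
    rcases bondSpin_eq_or ep S c with h | h <;> rw [h] <;> ring
  -- Step 1 : gauge invariance of the quenched Gibbs average
  have step1 : ∀ τ : V → Bool,
      ∫ j, Real.exp (potential ep x j τ - potential ep x j one) * G j ∂couplings x
        = ∫ j, G j ∂couplings x := by
    intro τ
    set A : ι → ℝ := fun c => (bondSpin ep τ c - 1) * x c with hA
    have h1dmap : ∀ c, (gaussianReal (x c) 1).map (fun t => bondSpin ep τ c * t)
        = gaussianReal (bondSpin ep τ c * x c) 1 := by
      intro c
      have h := gaussianReal_map_const_mul (μ := x c) (v := 1) (bondSpin ep τ c)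
      have hv : (NNReal.mk ((bondSpin ep τ c)^2) (sq_nonneg _)) * 1 = 1 := by
        ext
        push_cast
        rw [mul_one, sq]
        exact bondSpin_sq ep τ c
      rw [hv] at h
      exact h
    have hmapT : (couplings x).map (fun j c => bondSpin ep τ c * j c)
        = couplings (fun c => bondSpin ep τ c * x c) :=
      map_pi_coord _ _ _ (fun c => measurable_id.const_mul _) h1dmap
    have hTmeas : Measurable (fun (j : ι → ℝ) (c : ι) => bondSpin ep τ c * j c) :=
      measurable_pi_lambda _ fun c => (measurable_pi_apply c).const_mul _
    have hGinv : ∀ j, G (fun c => bondSpin ep τ c * j c) = G j := by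
      intro j
      rw [hG]
      exact gibbs_gauge ep x j τ b
    have step1a : ∫ j, G j ∂couplings (fun c => bondSpin ep τ c * x c)
        = ∫ j, G j ∂couplings x := by
      rw [← hmapT, integral_map hTmeas.aemeasurable hGmeas.aestronglyMeasurable]
      congr 1
      funext j
      exact hGinv j
    have htilt : couplings (fun c => bondSpin ep τ c * x c)
        = (couplings x).withDensity
          (fun j => ENNReal.ofReal (∏ c, Real.exp (A c * j c - A c * x c - (A c)^2/2))) := by
      have hmean : ∀ c, bondSpin ep τ c * x c = x c + A c := by intro c; rw [hA]; ring
      unfold couplings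
      have : (fun c => gaussianReal (bondSpin ep τ c * x c) 1)
          = fun c => gaussianReal (x c + A c) 1 := by
        funext c; rw [hmean c]
      rw [this]
      exact pi_withDensity (fun c => gaussianReal (x c) 1) (fun c => gaussianReal (x c + A c) 1)
        (fun c t => Real.exp (A c * t - A c * x c - (A c)^2/2)) (fun c t => Real.exp_nonneg _)
        (fun c => integrable_tilt_exp (x c) (A c))
        (fun c => gauss_tilt_measure (x c) (A c))
    have hwmeas : Measurable fun j : ι → ℝ =>
        ∏ c, Real.exp (A c * j c - A c * x c - (A c)^2/2) := by
      refine Finset.measurable_prod _ fun c _ => ?_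
      exact (((measurable_pi_apply (X := fun _ : ι => ℝ) c).const_mul (A c)).sub_const _).sub_const _ |>.exp
    have step1b : ∫ j, G j ∂couplings (fun c => bondSpin ep τ c * x c)
        = ∫ j, (∏ c, Real.exp (A c * j c - A c * x c - (A c)^2/2)) * G j ∂couplings x := by
      rw [htilt]
      exact integral_withDensity_ofReal _ _ hwmeas
        (fun j => Finset.prod_nonneg fun c _ => Real.exp_nonneg _) G
    have hwid : ∀ j : ι → ℝ, (∏ c, Real.exp (A c * j c - A c * x c - (A c)^2/2))
        = Real.exp (potential ep x j τ - potential ep x j one) := by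
      intro j
      have h1 : ∀ c, A c * j c - A c * x c - (A c)^2/2 = A c * j c := by
        intro c
        have := hconst τ c
        rw [hA]
        simp only
        nlinarith [hconst τ c]
      calc (∏ c, Real.exp (A c * j c - A c * x c - (A c)^2/2))
          = ∏ c, Real.exp (A c * j c) := by
            exact Finset.prod_congr rfl fun c _ => by rw [h1 c]
        _ = Real.exp (∑ c, A c * j c) := (Real.exp_sum _ _).symm
        _ = Real.exp (potential ep x j τ - potential ep x j one) := by
            rw [← hsum τ j]
    rw [← step1a, step1b]
    congr 1
    funext j
    rw [hwid j]
  -- Step 3 : integrability of each gauge term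
  have hGw_int : ∀ τ : V → Bool,
      Integrable (fun j => Real.exp (potential ep x j τ - potential ep x j one) * G j)
        (couplings x) := by
    intro τ
    set H : ι → ℝ → ℝ := fun c t =>
      (if c = b then |t| else 1) * Real.exp ((bondSpin ep τ c - 1) * x c * t) with hH
    have hHint : ∀ c, Integrable (H c) (gaussianReal (x c) 1) := by
      intro c
      rw [hH]
      by_cases hc : c = b
      · simp only [hc, if_pos rfl]
        exact integrable_abs_mul_exp_gauss _ _
      · simp only [if_neg hc, one_mul]
        exact integrable_exp_gauss _ _
    have hIbound : Integrable (fun j : ι → ℝ => ∏ c, H c (j c)) (couplings x) :=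
      integrable_pi_prod _ _ hHint
    refine Integrable.mono' hIbound ?_ (Filter.Eventually.of_forall fun j => ?_)
    · exact (((hpot_meas τ).sub (hpot_meas one)).exp.mul hGmeas).aestronglyMeasurable
    · have hprod : (∏ c, H c (j c))
          = |j b| * Real.exp (potential ep x j τ - potential ep x j one) := by
        rw [hH]
        simp only
        rw [Finset.prod_mul_distrib, Finset.prod_ite_eq' Finset.univ b (fun c => |j c|),
          if_pos (Finset.mem_univ b), ← Real.exp_sum, hsum τ j]
      rw [hprod]
      calc ‖Real.exp (potential ep x j τ - potential ep x j one) * G j‖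
          = Real.exp (potential ep x j τ - potential ep x j one) * |G j| := by
            rw [Real.norm_eq_abs, abs_mul, Real.abs_exp]
        _ ≤ Real.exp (potential ep x j τ - potential ep x j one) * |j b| := by
            exact mul_le_mul_of_nonneg_left (habsG j) (Real.exp_nonneg _)
        _ = |j b| * Real.exp (potential ep x j τ - potential ep x j one) := mul_comm _ _
  -- Step 4 : pointwise gauge-sum identity
  have hps : ∀ j : ι → ℝ,
      (∑ τ : V → Bool, Real.exp (potential ep x j τ - potential ep x j one) * G j)
        = ∑ S : V → Bool,
            (j b * bondSpin ep S b) * Real.exp (potential ep x j S - potential ep x j one) := by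
    intro j
    have hZpos := partitionFn_pos ep x j
    rw [← Finset.sum_mul]
    have hZ : (∑ τ : V → Bool, Real.exp (potential ep x j τ - potential ep x j one))
        = partitionFn ep x j * Real.exp (-potential ep x j one) := by
      unfold partitionFn
      rw [Finset.sum_mul]
      exact Finset.sum_congr rfl fun τ _ => by
        rw [← Real.exp_add, ← sub_eq_add_neg]
    rw [hZ, hG]
    unfold gibbs
    rw [show partitionFn ep x j * Real.exp (-potential ep x j one)
        * ((∑ S : V → Bool, (j b * bondSpin ep S b) * Real.exp (potential ep x j S))
            / partitionFn ep x j)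
        = (∑ S : V → Bool, (j b * bondSpin ep S b) * Real.exp (potential ep x j S))
            * Real.exp (-potential ep x j one) from by field_simp]
    rw [Finset.sum_mul]
    exact Finset.sum_congr rfl fun S _ => by
      rw [mul_assoc, ← Real.exp_add, ← sub_eq_add_neg]
  -- Step 5/6 : each spin term is a product whose integral is x b
  have hterm : ∀ S : V → Bool,
      (∫ j, (j b * bondSpin ep S b)
          * Real.exp (potential ep x j S - potential ep x j one) ∂couplings x) = x b := by
    intro S
    set F : ι → ℝ → ℝ := fun c t =>
      (if c = b then bondSpin ep S b * t else 1)
        * Real.exp ((bondSpin ep S c - 1) * x c * t) with hF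
    have hFeq : ∀ j : ι → ℝ, (j b * bondSpin ep S b)
        * Real.exp (potential ep x j S - potential ep x j one) = ∏ c, F c (j c) := by
      intro j
      rw [hF]
      simp only
      rw [Finset.prod_mul_distrib,
        Finset.prod_ite_eq' Finset.univ b (fun c => bondSpin ep S b * j c),
        if_pos (Finset.mem_univ b), ← Real.exp_sum, hsum S j]
      ring
    have hFval : ∀ c, (∫ t, F c t ∂gaussianReal (x c) 1) = if c = b then x b else 1 := by
      intro c
      rw [hF]
      by_cases hc : c = b
      · subst hc
        simp only [eq_self_iff_true, if_true]
        have : (fun t => bondSpin ep S c * t * Real.exp ((bondSpin ep S c - 1) * x c * t))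
            = fun t => bondSpin ep S c
                * (Real.exp (((bondSpin ep S c - 1) * x c) * t) * t) := by
          funext t; ring
        rw [this, integral_const_mul, integral_tilt _ _ (fun t => t), integral_id_gauss]
        have h0 : ((bondSpin ep S c - 1) * x c) * x c
            + ((bondSpin ep S c - 1) * x c)^2/2 = 0 := hconst S c
        rw [h0, Real.exp_zero, one_mul]
        rcases bondSpin_eq_or ep S c with h | h <;> rw [h] <;> ring
      · simp only [if_neg hc, one_mul]
        have : (fun t => Real.exp ((bondSpin ep S c - 1) * x c * t))
            = fun t => Real.exp (((bondSpin ep S c - 1) * x c) * t) * 1 := by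
          funext t; rw [mul_one]
        rw [this, integral_tilt _ _ (fun _ => 1), hconst S c, Real.exp_zero, one_mul,
          integral_const, probReal_univ, one_smul]
    have : (fun j : ι → ℝ => (j b * bondSpin ep S b)
        * Real.exp (potential ep x j S - potential ep x j one))
        = fun j => ∏ c, F c (j c) := funext hFeq
    rw [this]
    unfold couplings
    rw [integral_pi_prod]
    calc (∏ c, ∫ t, F c t ∂gaussianReal (x c) 1)
        = ∏ c, (if c = b then x b else 1) := Finset.prod_congr rfl fun c _ => hFval c
      _ = x b := by
          rw [Finset.prod_ite_eq' Finset.univ b (fun _ => x b), if_pos (Finset.mem_univ b)]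
  -- integrability of each spin term
  have hterm_int : ∀ S : V → Bool,
      Integrable (fun j => (j b * bondSpin ep S b)
        * Real.exp (potential ep x j S - potential ep x j one)) (couplings x) := by
    intro S
    set F : ι → ℝ → ℝ := fun c t =>
      (if c = b then bondSpin ep S b * t else 1)
        * Real.exp ((bondSpin ep S c - 1) * x c * t) with hF
    have hFeq : ∀ j : ι → ℝ, (j b * bondSpin ep S b)
        * Real.exp (potential ep x j S - potential ep x j one) = ∏ c, F c (j c) := by
      intro j
      rw [hF]
      simp only
      rw [Finset.prod_mul_distrib,
        Finset.prod_ite_eq' Finset.univ b (fun c => bondSpin ep S b * j c),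
        if_pos (Finset.mem_univ b), ← Real.exp_sum, hsum S j]
      ring
    have hFint : ∀ c, Integrable (F c) (gaussianReal (x c) 1) := by
      intro c
      rw [hF]
      by_cases hc : c = b
      · subst hc
        simp only [eq_self_iff_true, if_true]
        have : (fun t => bondSpin ep S c * t * Real.exp ((bondSpin ep S c - 1) * x c * t))
            = fun t => bondSpin ep S c * (t * Real.exp (((bondSpin ep S c - 1) * x c) * t)) := by
          funext t; ring
        rw [this]
        exact (integrable_mul_exp_gauss _ _).const_mul _
      · simp only [if_neg hc, one_mul]
        exact integrable_exp_gauss _ _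
    have : (fun j : ι → ℝ => (j b * bondSpin ep S b)
        * Real.exp (potential ep x j S - potential ep x j one))
        = fun j => ∏ c, F c (j c) := funext hFeq
    rw [this]
    exact integrable_pi_prod _ _ hFint
  -- assemble
  have hcard : (0:ℝ) < (Fintype.card (V → Bool) : ℝ) := by
    exact_mod_cast Fintype.card_pos
  unfold quenched
  have key : (Fintype.card (V → Bool) : ℝ) * (∫ j, G j ∂couplings x)
      = (Fintype.card (V → Bool) : ℝ) * x b := by
    calc (Fintype.card (V → Bool) : ℝ) * (∫ j, G j ∂couplings x)
        = ∑ τ : V → Bool, ∫ j, Real.exp (potential ep x j τ - potential ep x j one)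
            * G j ∂couplings x := by
          rw [Finset.sum_congr rfl fun τ _ => step1 τ, Finset.sum_const, Finset.card_univ,
            nsmul_eq_mul]
      _ = ∫ j, ∑ τ : V → Bool, Real.exp (potential ep x j τ - potential ep x j one)
            * G j ∂couplings x := (integral_finset_sum _ fun τ _ => hGw_int τ).symm
      _ = ∫ j, ∑ S : V → Bool, (j b * bondSpin ep S b)
            * Real.exp (potential ep x j S - potential ep x j one) ∂couplings x := by
          congr 1; funext j; exact hps j
      _ = ∑ S : V → Bool, ∫ j, (j b * bondSpin ep S b)
            * Real.exp (potential ep x j S - potential ep x j one) ∂couplings x :=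
          integral_finset_sum _ fun S _ => hterm_int S
      _ = ∑ S : V → Bool, x b := Finset.sum_congr rfl fun S _ => hterm S
      _ = (Fintype.card (V → Bool) : ℝ) * x b := by
          rw [Finset.sum_const, Finset.card_univ, nsmul_eq_mul]
  have := mul_left_cancel₀ (ne_of_gt hcard) key
  exact this


end
end

section
/- Nishimori gauge identity for a triple product of correlations: for every pair of bonds b, b' ∈ B, [⟨S_b⟩⟨S_{b'}⟩] = [⟨S_b⟩⟨S_{b'}⟩⟨S_b S_{b'}⟩]. -/
open MeasureTheory ProbabilityTheory Filter

noncomputable section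

set_option linter.unusedSectionVars false
set_option maxHeartbeats 1000000

open scoped ENNReal NNReal

namespace NishAux2


theorem lintegral_pi_prod_fin {n : ℕ} {E : Fin n → Type*} [∀ i, MeasurableSpace (E i)]
    (μ : ∀ i, Measure (E i)) [∀ i, SigmaFinite (μ i)]
    (f : (i : Fin n) → E i → ℝ≥0∞) (hf : ∀ i, Measurable (f i)) :
    ∫⁻ x : (i : Fin n) → E i, ∏ i, f i (x i) ∂Measure.pi μ = ∏ i, ∫⁻ x, f i x ∂μ i := by
  induction n with
  | zero =>
      simp only [Finset.univ_eq_empty, Finset.prod_empty, lintegral_const, one_mul]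
      simp [Measure.pi_of_empty]
  | succ n ih =>
      calc ∫⁻ x : (i : Fin (n+1)) → E i, ∏ i, f i (x i) ∂Measure.pi μ
          = ∫⁻ p : E 0 × ((i : Fin n) → E (Fin.succ i)),
              f 0 p.1 * ∏ i : Fin n, f (Fin.succ i) (p.2 i)
              ∂((μ 0).prod (Measure.pi fun i => μ (Fin.succ i))) := by
            rw [← ((measurePreserving_piFinSuccAbove μ 0).symm).lintegral_comp_emb
              (MeasurableEquiv.measurableEmbedding _)]
            congr 1
            funext p
            simp_rw [MeasurableEquiv.piFinSuccAbove_symm_apply, Fin.insertNthEquiv,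
              Fin.prod_univ_succ, Fin.insertNth_zero, Equiv.coe_fn_mk, Fin.cons_zero,
              Fin.zero_succAbove, Fin.cons_succ]
            rfl
        _ = (∫⁻ x, f 0 x ∂μ 0) *
              ∏ i : Fin n, ∫⁻ x, f (Fin.succ i) x ∂μ (Fin.succ i) := by
            rw [lintegral_prod_mul (f := f 0) (g := fun (y : (i : Fin n) → E i.succ) => ∏ i : Fin n, f i.succ (y i)) (hf 0).aemeasurable
              ((Finset.measurable_prod Finset.univ fun i _ =>
                (hf i.succ).comp (measurable_pi_apply i)).aemeasurable)]
            rw [ih (fun i => μ i.succ) (fun i => f i.succ) (fun i => hf i.succ)]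
        _ = ∏ i, ∫⁻ x, f i x ∂μ i := (Fin.prod_univ_succ fun i => ∫⁻ x, f i x ∂μ i).symm

theorem lintegral_pi_prod {ι : Type*} [Fintype ι] {E : ι → Type*} [∀ i, MeasurableSpace (E i)]
    (μ : ∀ i, Measure (E i)) [∀ i, SigmaFinite (μ i)]
    (f : (i : ι) → E i → ℝ≥0∞) (hf : ∀ i, Measurable (f i)) :
    ∫⁻ x : (i : ι) → E i, ∏ i, f i (x i) ∂Measure.pi μ = ∏ i, ∫⁻ x, f i x ∂μ i := by
  let e := (Fintype.equivFin ι).symm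
  rw [← (MeasureTheory.measurePreserving_piCongrLeft μ e).lintegral_comp_emb
    (MeasurableEquiv.measurableEmbedding _)]
  simp_rw [← e.prod_comp, MeasurableEquiv.coe_piCongrLeft, Equiv.piCongrLeft_apply_apply]
  exact lintegral_pi_prod_fin (fun k => μ (e k)) (fun k => f (e k)) (fun k => hf (e k))

theorem pi_withDensity {ι : Type*} [Fintype ι] {E : ι → Type*} [∀ i, MeasurableSpace (E i)]
    (μ : ∀ i, Measure (E i)) [∀ i, SigmaFinite (μ i)]
    (f : (i : ι) → E i → ℝ≥0∞) (hf : ∀ i, Measurable (f i))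
    [∀ i, SigmaFinite ((μ i).withDensity (f i))] :
    Measure.pi (fun i => (μ i).withDensity (f i)) =
      (Measure.pi μ).withDensity (fun x => ∏ i, f i (x i)) := by
  refine Measure.pi_eq (μ := fun i => (μ i).withDensity (f i)) fun s hs => ?_
  rw [withDensity_apply _ (MeasurableSet.univ_pi hs),
    ← lintegral_indicator (MeasurableSet.univ_pi hs) (fun x => ∏ i, f i (x i))]
  have hind : ∀ x : (i : ι) → E i,
      (Set.univ.pi s).indicator (fun x => ∏ i, f i (x i)) x
        = ∏ i, (s i).indicator (f i) (x i) := by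
    intro x
    by_cases hx : x ∈ Set.univ.pi s
    · rw [Set.indicator_of_mem hx]
      exact Finset.prod_congr rfl fun i _ =>
        (Set.indicator_of_mem (hx i trivial) _).symm
    · rw [Set.indicator_of_notMem hx]
      obtain ⟨i, hi⟩ : ∃ i, x i ∉ s i := by
        by_contra h
        push_neg at h
        exact hx fun i _ => h i
      exact (Finset.prod_eq_zero (Finset.mem_univ i)
        (Set.indicator_of_notMem hi _)).symm
  simp_rw [hind]
  rw [lintegral_pi_prod μ _ (fun i => (hf i).indicator (hs i))]
  exact Finset.prod_congr rfl fun i _ => by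
    rw [withDensity_apply _ (hs i), ← lintegral_indicator (hs i) (f i)]

end NishAux2

namespace NishAux


lemma spin_mul_self (s : Bool) : spin s * spin s = 1 := by cases s <;> norm_num [spin]

lemma spin_beq (a c : Bool) : spin (a == c) = spin a * spin c := by
  cases a <;> cases c <;> norm_num [spin]

variable {V ι : Type*} [Fintype V] [DecidableEq V] [Fintype ι]

lemma bondSpin_sq (ep : ι → V × V) (τ : V → Bool) (c : ι) :
    bondSpin ep τ c * bondSpin ep τ c = 1 := by
  unfold bondSpin; rw [mul_mul_mul_comm, spin_mul_self, spin_mul_self, one_mul]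

lemma bondSpin_sign (ep : ι → V × V) (τ : V → Bool) (c : ι) :
    bondSpin ep τ c = 1 ∨ bondSpin ep τ c = -1 := by
  unfold bondSpin
  rcases (ep c) with ⟨n, m⟩
  cases τ n <;> cases τ m <;> norm_num [spin]

/-- The gauge flip of a spin configuration. -/
def gf (τ S : V → Bool) : V → Bool := fun n => S n == τ n

lemma gf_gf (τ S : V → Bool) : gf τ (gf τ S) = S := by
  funext n; unfold gf; cases S n <;> cases τ n <;> rfl

/-- The gauge flip as an equivalence. -/
def gfe (τ : V → Bool) : (V → Bool) ≃ (V → Bool) :=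
  ⟨gf τ, gf τ, gf_gf τ, gf_gf τ⟩

lemma bondSpin_gf (ep : ι → V × V) (τ S : V → Bool) (c : ι) :
    bondSpin ep (gf τ S) c = bondSpin ep S c * bondSpin ep τ c := by
  unfold bondSpin gf; rw [spin_beq, spin_beq]; ring

lemma potential_sign (ep : ι → V × V) (x j : ι → ℝ) (τ S : V → Bool) :
    potential ep x (fun c => bondSpin ep τ c * j c) S = potential ep x j (gf τ S) := by
  unfold potential
  refine Finset.sum_congr rfl fun c _ => ?_
  rw [bondSpin_gf]; ring

lemma partitionFn_sign (ep : ι → V × V) (x j : ι → ℝ) (τ : V → Bool) :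
    partitionFn ep x (fun c => bondSpin ep τ c * j c) = partitionFn ep x j := by
  unfold partitionFn
  simp_rw [potential_sign]
  exact Fintype.sum_equiv (gfe τ) _ _ (fun S => rfl)

lemma numerator_sign (ep : ι → V × V) (x j : ι → ℝ) (τ : V → Bool) (f : (V → Bool) → ℝ) :
    (∑ S : V → Bool, f S * Real.exp (potential ep x (fun c => bondSpin ep τ c * j c) S))
      = ∑ S : V → Bool, f (gf τ S) * Real.exp (potential ep x j S) := by
  simp_rw [potential_sign]
  refine Fintype.sum_equiv (gfe τ) _ _ (fun S => ?_)
  simp only [gfe, Equiv.coe_fn_mk, gf_gf]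

lemma gibbs_bond_sign (ep : ι → V × V) (x j : ι → ℝ) (τ : V → Bool) (c : ι) :
    gibbs ep x (fun d => bondSpin ep τ d * j d) (fun S => bondSpin ep S c)
      = bondSpin ep τ c * gibbs ep x j (fun S => bondSpin ep S c) := by
  unfold gibbs
  rw [partitionFn_sign, numerator_sign, ← mul_div_assoc]
  congr 1
  rw [Finset.mul_sum]
  refine Finset.sum_congr rfl fun S _ => ?_
  rw [bondSpin_gf]; ring

lemma gibbs_bond2_sign (ep : ι → V × V) (x j : ι → ℝ) (τ : V → Bool) (b b' : ι) :
    gibbs ep x (fun d => bondSpin ep τ d * j d) (fun S => bondSpin ep S b * bondSpin ep S b')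
      = bondSpin ep τ b * bondSpin ep τ b' *
          gibbs ep x j (fun S => bondSpin ep S b * bondSpin ep S b') := by
  unfold gibbs
  rw [partitionFn_sign, numerator_sign, ← mul_div_assoc]
  congr 1
  rw [Finset.mul_sum]
  refine Finset.sum_congr rfl fun S _ => ?_
  rw [bondSpin_gf, bondSpin_gf]; ring

lemma partitionFn_pos (ep : ι → V × V) (x j : ι → ℝ) : 0 < partitionFn ep x j :=
  Finset.sum_pos (fun S _ => Real.exp_pos _) ⟨fun _ => false, Finset.mem_univ _⟩

lemma abs_gibbs_le (ep : ι → V × V) (x j : ι → ℝ) {f : (V → Bool) → ℝ}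
    (hf : ∀ S, |f S| ≤ 1) : |gibbs ep x j f| ≤ 1 := by
  unfold gibbs
  rw [abs_div, abs_of_pos (partitionFn_pos ep x j), div_le_one (partitionFn_pos ep x j)]
  calc |∑ S : V → Bool, f S * Real.exp (potential ep x j S)|
      ≤ ∑ S : V → Bool, |f S * Real.exp (potential ep x j S)| := Finset.abs_sum_le_sum_abs _ _
    _ ≤ ∑ S : V → Bool, Real.exp (potential ep x j S) := by
        refine Finset.sum_le_sum fun S _ => ?_
        rw [abs_mul, abs_of_pos (Real.exp_pos _)]
        exact mul_le_of_le_one_left (Real.exp_pos _).le (hf S)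
    _ = partitionFn ep x j := rfl

lemma continuous_gibbs (ep : ι → V × V) (x : ι → ℝ) (f : (V → Bool) → ℝ) :
    Continuous fun j => gibbs ep x j f := by
  have hpot : ∀ S : V → Bool, Continuous fun j : ι → ℝ => potential ep x j S := by
    intro S
    unfold potential
    exact continuous_finset_sum _ fun c _ =>
      ((continuous_const.mul (continuous_apply c)).mul continuous_const)
  have hZ : Continuous fun j => partitionFn ep x j :=
    continuous_finset_sum _ fun S _ => (hpot S).rexp
  exact (continuous_finset_sum _ fun S _ =>
    continuous_const.mul (hpot S).rexp).div hZ fun j => (partitionFn_pos ep x j).ne'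


variable {ι : Type*} [Fintype ι]

/-- The product Gaussian density, `ℝ≥0`-valued. -/
def nden (x : ι → ℝ) (j : ι → ℝ) : ℝ≥0 :=
  ∏ c, Real.toNNReal (gaussianPDFReal (x c) 1 (j c))

lemma measurable_nden (x : ι → ℝ) : Measurable (nden x) :=
  Finset.measurable_prod _ fun c _ =>
    measurable_real_toNNReal.comp
      ((measurable_gaussianPDFReal (x c) 1).comp (measurable_pi_apply c))

lemma couplings_eq (x : ι → ℝ) :
    couplings x = (Measure.pi fun _ : ι => (volume : Measure ℝ)).withDensity
      (fun j => ((nden x j : ℝ≥0) : ℝ≥0∞)) := by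
  have h1 : (fun c : ι => gaussianReal (x c) 1)
      = fun c => (volume : Measure ℝ).withDensity (gaussianPDF (x c) 1) := by
    funext c; exact gaussianReal_of_var_ne_zero _ one_ne_zero
  haveI : ∀ c : ι, SigmaFinite ((volume : Measure ℝ).withDensity (gaussianPDF (x c) 1)) := by
    intro c
    rw [← gaussianReal_of_var_ne_zero _ one_ne_zero]
    infer_instance
  unfold couplings
  rw [h1, NishAux2.pi_withDensity _ _ (fun c => measurable_gaussianPDF (x c) 1)]
  congr 1
  funext j
  rw [nden, ENNReal.coe_finset_prod]
  exact Finset.prod_congr rfl fun c _ => rfl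

lemma pdf_tilt {m m' : ℝ} (h : m' ^ 2 = m ^ 2) (y : ℝ) :
    gaussianPDFReal m' 1 y = gaussianPDFReal m 1 y * Real.exp ((m' - m) * y) := by
  simp only [gaussianPDFReal, NNReal.coe_one, mul_one]
  rw [mul_assoc, ← Real.exp_add]
  have hh : -(y - m') ^ 2 / 2 = -(y - m) ^ 2 / 2 + (m' - m) * y := by linear_combination -h / 2
  rw [hh]

lemma nden_tilt (x x' : ι → ℝ) (hxx : ∀ c, x' c ^ 2 = x c ^ 2) (j : ι → ℝ) :
    ((nden x' j : ℝ≥0) : ℝ) = (nden x j : ℝ) * Real.exp (∑ c, (x' c - x c) * j c) := by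
  unfold nden
  rw [NNReal.coe_prod, NNReal.coe_prod, Real.exp_sum, ← Finset.prod_mul_distrib]
  refine Finset.prod_congr rfl fun c _ => ?_
  rw [Real.coe_toNNReal _ (gaussianPDFReal_nonneg _ _ _),
    Real.coe_toNNReal _ (gaussianPDFReal_nonneg _ _ _)]
  exact pdf_tilt (hxx c) (j c)

lemma integral_couplings_tilt (x x' : ι → ℝ) (hxx : ∀ c, x' c ^ 2 = x c ^ 2)
    (F : (ι → ℝ) → ℝ) :
    ∫ j, F j ∂(couplings x')
      = ∫ j, F j * Real.exp (∑ c, (x' c - x c) * j c) ∂(couplings x) := by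
  rw [couplings_eq x, couplings_eq x',
    integral_withDensity_eq_integral_smul (measurable_nden x') F,
    integral_withDensity_eq_integral_smul (measurable_nden x) _]
  congr 1
  funext j
  rw [NNReal.smul_def, NNReal.smul_def, nden_tilt x x' hxx j]
  simp only [smul_eq_mul]
  ring

lemma integrable_tilt (x x' : ι → ℝ) (hxx : ∀ c, x' c ^ 2 = x c ^ 2)
    {F : (ι → ℝ) → ℝ} (hFm : Measurable F) (hFb : ∀ j, |F j| ≤ 1) :
    Integrable (fun j => F j * Real.exp (∑ c, (x' c - x c) * j c)) (couplings x) := by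
  haveI : IsProbabilityMeasure (couplings x') := by unfold couplings; infer_instance
  have h1 : Integrable F (couplings x') :=
    Integrable.mono' (integrable_const (1 : ℝ)) hFm.aestronglyMeasurable
      (Filter.Eventually.of_forall fun j => by simpa using hFb j)
  rw [couplings_eq x', integrable_withDensity_iff_integrable_smul (measurable_nden x')] at h1
  rw [couplings_eq x, integrable_withDensity_iff_integrable_smul (measurable_nden x)]
  have h2 : (fun j => nden x j • (F j * Real.exp (∑ c, (x' c - x c) * j c)))
      = fun j => nden x' j • F j := by
    funext j
    rw [NNReal.smul_def, NNReal.smul_def, nden_tilt x x' hxx j]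
    simp only [smul_eq_mul]
    ring
  rw [h2]
  exact h1

lemma couplings_map_sign (ε : ι → ℝ) (hε : ∀ c, ε c = 1 ∨ ε c = -1) (x : ι → ℝ) :
    MeasurePreserving (fun (j : ι → ℝ) (c : ι) => ε c * j c)
      (couplings (fun c => ε c * x c)) (couplings x) := by
  unfold couplings
  refine MeasureTheory.measurePreserving_pi _ _ fun c => ?_
  refine ⟨measurable_id.const_mul (ε c), ?_⟩
  rw [gaussianReal_map_const_mul (ε c)]
  have h2 : ε c * (ε c * x c) = x c := by rcases hε c with h | h <;> rw [h] <;> ring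
  have h4 : NNReal.mk (ε c ^ 2) (sq_nonneg _) = 1 := by
    rcases hε c with h | h <;> (apply NNReal.coe_injective; show ε c ^ 2 = ((1 : ℝ≥0) : ℝ); norm_num [h])
  rw [h2, h4, one_mul]

/-- Componentwise sign flip as a measurable equivalence. -/
def signME (ε : ι → ℝ) (hε : ∀ c, ε c = 1 ∨ ε c = -1) : (ι → ℝ) ≃ᵐ (ι → ℝ) where
  toEquiv :=
  { toFun := fun j c => ε c * j c
    invFun := fun j c => ε c * j c
    left_inv := fun j => by funext c; rcases hε c with h | h <;> simp [h]
    right_inv := fun j => by funext c; rcases hε c with h | h <;> simp [h] }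
  measurable_toFun :=
    measurable_pi_lambda _ fun c => (measurable_pi_apply c).const_mul _
  measurable_invFun :=
    measurable_pi_lambda _ fun c => (measurable_pi_apply c).const_mul _

lemma integral_couplings_sign (ε : ι → ℝ) (hε : ∀ c, ε c = 1 ∨ ε c = -1) (x : ι → ℝ)
    (F : (ι → ℝ) → ℝ) :
    ∫ j, F j ∂(couplings x)
      = ∫ j, F (fun c => ε c * j c) ∂(couplings (fun c => ε c * x c)) :=
  ((couplings_map_sign ε hε x).integral_comp
    (signME ε hε).measurableEmbedding F).symm


variable {V : Type*} [Fintype V] [DecidableEq V]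

lemma sq_helper {a a' g k l : ℝ} (h1 : a * a = 1) (h2 : a' * a' = 1) :
    a * g * (a' * k) * (a * a' * l) = g * k * l := by
  linear_combination (g * k * l * (a' * a')) * h1 + (g * k * l) * h2

lemma quenched_gauge_step (ep : ι → V × V) (x : ι → ℝ) (τ : V → Bool)
    (F : (ι → ℝ) → ℝ) :
    quenched x F = ∫ j, F (fun c => bondSpin ep τ c * j c) *
      Real.exp (∑ c, (bondSpin ep τ c * x c - x c) * j c) ∂(couplings x) := by
  have hε : ∀ c, bondSpin ep τ c = 1 ∨ bondSpin ep τ c = -1 := bondSpin_sign ep τ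
  have hxx : ∀ c, (bondSpin ep τ c * x c) ^ 2 = x c ^ 2 := by
    intro c; rcases hε c with h | h <;> rw [h] <;> ring
  calc quenched x F = ∫ j, F j ∂(couplings x) := rfl
    _ = ∫ j, F (fun c => bondSpin ep τ c * j c)
          ∂(couplings (fun c => bondSpin ep τ c * x c)) :=
        integral_couplings_sign (fun c => bondSpin ep τ c) hε x F
    _ = ∫ j, F (fun c => bondSpin ep τ c * j c) *
          Real.exp (∑ c, (bondSpin ep τ c * x c - x c) * j c) ∂(couplings x) :=
        integral_couplings_tilt x (fun c => bondSpin ep τ c * x c) hxx _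

end NishAux

/-- Nishimori gauge identity for a triple product of correlations:
for all bonds `b, b'`, `[⟨S_b⟩⟨S_{b'}⟩] = [⟨S_b⟩⟨S_{b'}⟩⟨S_b S_{b'}⟩]`. -/
theorem nishimori_triple_identity
    {V ι : Type*} [Fintype V] [DecidableEq V] [Fintype ι]
    (ep : ι → V × V) (hep : ∀ b, (ep b).1 ≠ (ep b).2)
    (x : ι → ℝ) (hx : ∀ b, 0 ≤ x b) (b b' : ι) :
    quenched x (fun j =>
        gibbs ep x j (fun S => bondSpin ep S b) * gibbs ep x j (fun S => bondSpin ep S b')) =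
      quenched x (fun j =>
        gibbs ep x j (fun S => bondSpin ep S b) * gibbs ep x j (fun S => bondSpin ep S b') *
          gibbs ep x j (fun S => bondSpin ep S b * bondSpin ep S b')) := by
  classical
  have habs1 : ∀ (S : V → Bool) (c : ι), |bondSpin ep S c| ≤ 1 := by
    intro S c; rcases NishAux.bondSpin_sign ep S c with h | h <;> rw [h] <;> norm_num
  set G : (ι → ℝ) → ℝ := fun j =>
    gibbs ep x j (fun S => bondSpin ep S b) * gibbs ep x j (fun S => bondSpin ep S b')
    with hGdef
  set H : (ι → ℝ) → ℝ := fun j =>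
    gibbs ep x j (fun S => bondSpin ep S b) * gibbs ep x j (fun S => bondSpin ep S b') *
      gibbs ep x j (fun S => bondSpin ep S b * bondSpin ep S b') with hHdef
  have hGm : Measurable G := by
    rw [hGdef]
    exact ((NishAux.continuous_gibbs ep x _).mul (NishAux.continuous_gibbs ep x _)).measurable
  have hHm : Measurable H := by
    rw [hHdef]
    exact (((NishAux.continuous_gibbs ep x _).mul (NishAux.continuous_gibbs ep x _)).mul
      (NishAux.continuous_gibbs ep x _)).measurable
  have hGb : ∀ j, |G j| ≤ 1 := by
    intro j
    simp only [hGdef]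
    rw [abs_mul]
    exact mul_le_one₀ (NishAux.abs_gibbs_le ep x j (fun S => habs1 S b)) (abs_nonneg _)
      (NishAux.abs_gibbs_le ep x j (fun S => habs1 S b'))
  have hKb : ∀ j, |gibbs ep x j (fun S => bondSpin ep S b * bondSpin ep S b')| ≤ 1 := by
    intro j
    refine NishAux.abs_gibbs_le ep x j (fun S => ?_)
    rw [abs_mul]
    exact mul_le_one₀ (habs1 S b) (abs_nonneg _) (habs1 S b')
  have hHb : ∀ j, |H j| ≤ 1 := by
    intro j
    simp only [hHdef]
    rw [abs_mul]
    refine mul_le_one₀ ?_ (abs_nonneg _) (hKb j)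
    simpa only [hGdef] using hGb j
  have hInt : ∀ (F : (ι → ℝ) → ℝ), Measurable F → (∀ j, |F j| ≤ 1) → ∀ τ : V → Bool,
      Integrable (fun j => F (fun c => bondSpin ep τ c * j c) *
        Real.exp (∑ c, (bondSpin ep τ c * x c - x c) * j c)) (couplings x) := by
    intro F hFm hFb τ
    have hε := NishAux.bondSpin_sign ep τ
    have hxx : ∀ c, (bondSpin ep τ c * x c) ^ 2 = x c ^ 2 := by
      intro c; rcases hε c with h | h <;> rw [h] <;> ring
    have hTm : Measurable fun j : ι → ℝ => (fun c => bondSpin ep τ c * j c) :=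
      measurable_pi_lambda _ fun c => (measurable_pi_apply c).const_mul _
    exact NishAux.integrable_tilt x (fun c => bondSpin ep τ c * x c) hxx
      (hFm.comp hTm) (fun j => hFb _)
  have hpt : ∀ j : ι → ℝ,
      (∑ τ : V → Bool, G (fun c => bondSpin ep τ c * j c) *
        Real.exp (∑ c, (bondSpin ep τ c * x c - x c) * j c))
      = ∑ τ : V → Bool, H (fun c => bondSpin ep τ c * j c) *
        Real.exp (∑ c, (bondSpin ep τ c * x c - x c) * j c) := by
    intro j
    have hZ := (NishAux.partitionFn_pos ep x j).ne'
    have hw : ∀ τ : V → Bool, Real.exp (∑ c, (bondSpin ep τ c * x c - x c) * j c)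
        = Real.exp (potential ep x j τ) * Real.exp (-∑ c, x c * j c) := by
      intro τ
      rw [← Real.exp_add]
      congr 1
      simp only [potential]
      rw [← Finset.sum_neg_distrib, ← Finset.sum_add_distrib]
      exact Finset.sum_congr rfl fun c _ => by ring
    have hGT : ∀ τ : V → Bool, G (fun c => bondSpin ep τ c * j c)
        = bondSpin ep τ b * bondSpin ep τ b' * G j := by
      intro τ
      simp only [hGdef]
      rw [NishAux.gibbs_bond_sign, NishAux.gibbs_bond_sign]
      ring
    have hHT : ∀ τ : V → Bool, H (fun c => bondSpin ep τ c * j c) = H j := by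
      intro τ
      simp only [hHdef]
      rw [NishAux.gibbs_bond_sign, NishAux.gibbs_bond_sign, NishAux.gibbs_bond2_sign]
      exact NishAux.sq_helper (NishAux.bondSpin_sq ep τ b) (NishAux.bondSpin_sq ep τ b')
    calc (∑ τ : V → Bool, G (fun c => bondSpin ep τ c * j c) *
            Real.exp (∑ c, (bondSpin ep τ c * x c - x c) * j c))
        = ∑ τ : V → Bool, (G j * Real.exp (-∑ c, x c * j c)) *
            (bondSpin ep τ b * bondSpin ep τ b' * Real.exp (potential ep x j τ)) := by
          refine Finset.sum_congr rfl fun τ _ => ?_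
          rw [hGT τ, hw τ]; ring
      _ = (G j * Real.exp (-∑ c, x c * j c)) *
            ∑ τ : V → Bool, bondSpin ep τ b * bondSpin ep τ b' *
              Real.exp (potential ep x j τ) := by
          rw [Finset.mul_sum]
      _ = (G j * Real.exp (-∑ c, x c * j c)) *
            (gibbs ep x j (fun S => bondSpin ep S b * bondSpin ep S b') *
              partitionFn ep x j) := by
          congr 1
          rw [gibbs, div_mul_cancel₀ _ hZ]
      _ = (H j * Real.exp (-∑ c, x c * j c)) * partitionFn ep x j := by
          simp only [hHdef, hGdef]; ring
      _ = ∑ τ : V → Bool, H (fun c => bondSpin ep τ c * j c) *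
            Real.exp (∑ c, (bondSpin ep τ c * x c - x c) * j c) := by
          rw [partitionFn, Finset.mul_sum]
          refine (Finset.sum_congr rfl fun τ _ => ?_).symm
          rw [hHT τ, hw τ]; ring
  have key : ∀ (F : (ι → ℝ) → ℝ), Measurable F → (∀ j, |F j| ≤ 1) →
      (Fintype.card (V → Bool) : ℝ) * quenched x F
        = ∫ j, ∑ τ : V → Bool, F (fun c => bondSpin ep τ c * j c) *
            Real.exp (∑ c, (bondSpin ep τ c * x c - x c) * j c) ∂(couplings x) := by
    intro F hFm hFb
    calc (Fintype.card (V → Bool) : ℝ) * quenched x F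
        = ∑ _τ : V → Bool, quenched x F := by
          rw [Finset.sum_const, Finset.card_univ, nsmul_eq_mul]
      _ = ∑ τ : V → Bool, ∫ j, F (fun c => bondSpin ep τ c * j c) *
            Real.exp (∑ c, (bondSpin ep τ c * x c - x c) * j c) ∂(couplings x) :=
          Finset.sum_congr rfl fun τ _ => NishAux.quenched_gauge_step ep x τ F
      _ = ∫ j, ∑ τ : V → Bool, F (fun c => bondSpin ep τ c * j c) *
            Real.exp (∑ c, (bondSpin ep τ c * x c - x c) * j c) ∂(couplings x) :=
          (integral_finset_sum _ (fun τ _ => hInt F hFm hFb τ)).symm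
  have hmain : (Fintype.card (V → Bool) : ℝ) * quenched x G
      = (Fintype.card (V → Bool) : ℝ) * quenched x H := by
    rw [key G hGm hGb, key H hHm hHb]
    exact integral_congr_ae (Filter.Eventually.of_forall hpt)
  exact mul_left_cancel₀ (Nat.cast_ne_zero.mpr Fintype.card_ne_zero) hmain

end
end
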